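/- For every integer k ≥ 1, the total domination number of the prism of the cycle of length 6k+1 satisfies γ_t(C_{6k+1} □ K₂) = 2·γ(C_{6k+1}) − 1; equivalently, γ_t(C_{6k+1} □ K₂) = 4k + 1. -/

import Mathlib

open SimpleGraph

/-- The complete graph on two vertices. -/
abbrev K2 : SimpleGraph (Fin 2) := ⊤

/-- `S` is a dominating set of `G`: every vertex not in `S` is adjacent to a vertex of `S`. -/
def IsDominatingSet {V : Type*} (G : SimpleGraph V) (S : Finset V) : Prop :=
  ∀ v : V, v ∉ S → ∃ u ∈ S, G.Adj v u

/-- `S` is a total dominating set of `G`: every vertex is adjacent to a vertex of `S`. -/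
def IsTotalDominatingSet {V : Type*} (G : SimpleGraph V) (S : Finset V) : Prop :=
  ∀ v : V, ∃ u ∈ S, G.Adj v u

/-- The domination number of `G`. -/
noncomputable def dominationNumber {V : Type*} (G : SimpleGraph V) : ℕ :=
  sInf {n : ℕ | ∃ S : Finset V, IsDominatingSet G S ∧ S.card = n}

/-- The total domination number of `G`. -/
noncomputable def totalDominationNumber {V : Type*} (G : SimpleGraph V) : ℕ :=
  sInf {n : ℕ | ∃ S : Finset V, IsTotalDominatingSet G S ∧ S.card = n}

/-! ### Auxiliary lemmas -/

section Aux

/-- The vertex of `Fin n` with (mod) index `a`. -/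
def cv (n a : ℕ) (hn : 0 < n) : Fin n := ⟨a % n, Nat.mod_lt _ hn⟩

lemma cv_eq {n : ℕ} (hn : 0 < n) {a b : ℕ} (h : a % n = b % n) : cv n a hn = cv n b hn := by
  simp [cv, h]

lemma cv_val {n : ℕ} (hn : 0 < n) {a : ℕ} (h : a < n) : (cv n a hn).val = a :=
  Nat.mod_eq_of_lt h

lemma cv_adj {n : ℕ} (hn : 0 < n) (hn7 : 7 ≤ n) (a : ℕ) :
    (cycleGraph n).Adj (cv n a hn) (cv n (a+1) hn) := by
  rw [cycleGraph_adj']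
  right
  rw [Fin.sub_def]
  have hb : a % n < n := Nat.mod_lt _ hn
  have h1 : (a+1) % n = (a % n + 1) % n := by
    conv_lhs => rw [Nat.add_mod, Nat.mod_eq_of_lt (show 1 < n by omega)]
  show (n - (cv n a hn).val + (cv n (a+1) hn).val) % n = 1
  show (n - a % n + (a+1) % n) % n = 1
  rcases Nat.lt_or_ge (a % n + 1) n with h | h
  · have he : n - a % n + (a+1) % n = n + 1 := by rw [h1, Nat.mod_eq_of_lt h]; omega
    rw [he, Nat.add_mod_left, Nat.mod_eq_of_lt (by omega)]
  · have hbe : a % n + 1 = n := by omega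
    have h0 : (a+1) % n = 0 := by rw [h1, hbe, Nat.mod_self]
    rw [h0, Nat.add_zero]
    have h2 : n - a % n = 1 := by omega
    rw [h2, Nat.mod_eq_of_lt (by omega)]

lemma cv_self {n : ℕ} (hn : 0 < n) (v : Fin n) : cv n v.val hn = v := by
  simp [cv, Nat.mod_eq_of_lt v.isLt]

lemma vert_adj {V : Type*} {G : SimpleGraph V} {v : V} {r s : Fin 2} (h : r ≠ s) :
    (G □ K2).Adj (v, r) (v, s) :=
  SimpleGraph.boxProd_adj.mpr (Or.inr ⟨(SimpleGraph.top_adj r s).mpr h, rfl⟩)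

/-- A total dominating set has total degree at least the number of vertices. -/
lemma total_lb {V : Type*} [Fintype V] [DecidableEq V] {G : SimpleGraph V}
    [DecidableRel G.Adj] {S : Finset V} (h : IsTotalDominatingSet G S) :
    Fintype.card V ≤ ∑ u ∈ S, G.degree u := by
  have hsub : (Finset.univ : Finset V) ⊆ S.biUnion (fun u => G.neighborFinset u) := by
    intro v _
    obtain ⟨u, hu, hadj⟩ := h v
    exact Finset.mem_biUnion.mpr ⟨u, hu, (G.mem_neighborFinset u v).mpr hadj.symm⟩
  calc Fintype.card V = (Finset.univ : Finset V).card := (Finset.card_univ).symm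
    _ ≤ (S.biUnion (fun u => G.neighborFinset u)).card := Finset.card_le_card hsub
    _ ≤ ∑ u ∈ S, (G.neighborFinset u).card := Finset.card_biUnion_le
    _ = ∑ u ∈ S, G.degree u := rfl

/-- A dominating set has total closed degree at least the number of vertices. -/
lemma dom_lb {V : Type*} [Fintype V] [DecidableEq V] {G : SimpleGraph V}
    [DecidableRel G.Adj] {S : Finset V} (h : IsDominatingSet G S) :
    Fintype.card V ≤ ∑ u ∈ S, (G.degree u + 1) := by
  have hsub : (Finset.univ : Finset V) ⊆ S.biUnion (fun u => insert u (G.neighborFinset u)) := by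
    intro v _
    by_cases hv : v ∈ S
    · exact Finset.mem_biUnion.mpr ⟨v, hv, Finset.mem_insert_self _ _⟩
    · obtain ⟨u, hu, hadj⟩ := h v hv
      exact Finset.mem_biUnion.mpr ⟨u, hu, Finset.mem_insert.mpr
        (Or.inr ((G.mem_neighborFinset u v).mpr hadj.symm))⟩
  calc Fintype.card V = (Finset.univ : Finset V).card := (Finset.card_univ).symm
    _ ≤ (S.biUnion (fun u => insert u (G.neighborFinset u))).card := Finset.card_le_card hsub
    _ ≤ ∑ u ∈ S, (insert u (G.neighborFinset u)).card := Finset.card_biUnion_le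
    _ ≤ ∑ u ∈ S, (G.degree u + 1) := Finset.sum_le_sum (fun u _ => by
        simpa [Nat.add_comm] using Finset.card_insert_le u (G.neighborFinset u))

lemma cyc_deg {n : ℕ} (h : 3 ≤ n) (v : Fin n) : (cycleGraph n).degree v = 2 := by
  obtain ⟨m, rfl⟩ : ∃ m, n = m + 3 := ⟨n - 3, by omega⟩
  exact cycleGraph_degree_three_le

instance boxProdK2Decidable {n : ℕ} : DecidableRel ((cycleGraph n) □ K2).Adj :=
  fun _ _ => decidable_of_iff' _ SimpleGraph.boxProd_adj

lemma prism_deg {n : ℕ} (h : 3 ≤ n) (x : Fin n × Fin 2)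
    [Fintype (((cycleGraph n) □ K2).neighborSet x)] :
    ((cycleGraph n) □ K2).degree x = 3 := by
  rw [SimpleGraph.degree_boxProd, cyc_deg h]
  have h2 : ∀ r : Fin 2, (⊤ : SimpleGraph (Fin 2)).degree r = 1 := by decide
  rw [h2]

end Aux

section Sets

variable (k : ℕ)

lemma n6_pos : 0 < 6 * k + 1 := by omega

/-- A dominating set of the cycle `C_{6k+1}` of size `2k+1`. -/
def domS : Finset (Fin (6*k+1)) :=
  (Finset.range (2*k+1)).image (fun i => cv (6*k+1) (3*i) (n6_pos k))

lemma domS_card : (domS k).card = 2*k+1 := by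
  rw [domS, Finset.card_image_of_injOn, Finset.card_range]
  intro i hi j hj hij
  simp only [Finset.mem_coe, Finset.mem_range] at hi hj
  have h := congrArg Fin.val hij
  simp only [cv] at h
  rw [Nat.mod_eq_of_lt (by omega), Nat.mod_eq_of_lt (by omega)] at h
  omega

lemma mem_domS (i : ℕ) (hi : i < 2*k+1) : cv (6*k+1) (3*i) (n6_pos k) ∈ domS k :=
  Finset.mem_image.mpr ⟨i, Finset.mem_range.mpr hi, rfl⟩

lemma domS_dom (hk : 1 ≤ k) : IsDominatingSet (cycleGraph (6*k+1)) (domS k) := by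
  intro v hv
  have hn7 : 7 ≤ 6*k+1 := by omega
  set m := v.val with hm
  have hmlt : m < 6*k+1 := v.isLt
  have hveq : v = cv (6*k+1) m (n6_pos k) := (cv_self _ v).symm
  rcases show m % 3 = 0 ∨ m % 3 = 1 ∨ m % 3 = 2 by omega with h0 | h1 | h2
  · exfalso
    apply hv
    rw [hveq, show m = 3 * (m/3) by omega]
    exact mem_domS k (m/3) (by omega)
  · refine ⟨cv (6*k+1) (m-1) (n6_pos k), ?_, ?_⟩
    · rw [show m - 1 = 3 * ((m-1)/3) by omega]
      exact mem_domS k ((m-1)/3) (by omega)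
    · have h := cv_adj (n6_pos k) hn7 (m-1)
      rw [show m - 1 + 1 = m by omega] at h
      rw [hveq]; exact h.symm
  · refine ⟨cv (6*k+1) (m+1) (n6_pos k), ?_, ?_⟩
    · rw [show m + 1 = 3 * ((m+1)/3) by omega]
      exact mem_domS k ((m+1)/3) (by omega)
    · rw [hveq]; exact cv_adj (n6_pos k) hn7 m

/-- The generating function for the total dominating set of the prism. -/
def tdF (j : ℕ) : Fin (6*k+1) × Fin 2 :=
  if j = 4*k then (cv (6*k+1) (6*k) (n6_pos k), 0)
  else (cv (6*k+1) (6*(j/4) + (if j % 4 < 2 then j % 4 else j % 4 + 1)) (n6_pos k),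
        if j % 4 < 2 then 0 else 1)

/-- A total dominating set of the prism of `C_{6k+1}` of size `4k+1`. -/
def tdS : Finset (Fin (6*k+1) × Fin 2) := (Finset.range (4*k+1)).image (tdF k)

lemma tdF_eval (q t : ℕ) (hq : q < k) (ht : t < 4) :
    tdF k (4*q+t) = (cv (6*k+1) (6*q + (if t < 2 then t else t+1)) (n6_pos k),
      if t < 2 then 0 else 1) := by
  have h4 : (4*q+t) % 4 = t := by omega
  have hd : (4*q+t) / 4 = q := by omega
  rw [tdF, if_neg (by omega), h4, hd]

lemma tdF_last : tdF k (4*k) = (cv (6*k+1) (6*k) (n6_pos k), 0) := by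
  rw [tdF, if_pos rfl]

lemma tdS_card (hk : 1 ≤ k) : (tdS k).card = 4*k+1 := by
  rw [tdS, Finset.card_image_of_injOn, Finset.card_range]
  intro a ha b hb hab
  simp only [Finset.mem_coe, Finset.mem_range] at ha hb
  have colval : ∀ j, j < 4*k →
      (tdF k j).1.val = 6*(j/4) + (if j % 4 < 2 then j % 4 else j % 4 + 1) := by
    intro j hj
    rw [tdF, if_neg (by omega)]
    show (6*(j/4) + _) % (6*k+1) = _
    apply Nat.mod_eq_of_lt
    have : j/4 ≤ k - 1 := by omega
    split <;> omega
  have row : ∀ j, j < 4*k → (tdF k j).2 = (if j % 4 < 2 then (0 : Fin 2) else 1) := by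
    intro j hj
    rw [tdF, if_neg (by omega)]
  have colval' : (tdF k (4*k)).1.val = 6*k := by
    rw [tdF_last]; exact cv_val (n6_pos k) (by omega)
  by_cases hA : a = 4*k <;> by_cases hB : b = 4*k
  · omega
  · exfalso
    have h1 := congrArg (fun p => (Prod.fst p).val) hab
    rw [hA, colval', colval b (by omega)] at h1
    have : b/4 ≤ k - 1 := by omega
    split at h1 <;> omega
  · exfalso
    have h1 := congrArg (fun p => (Prod.fst p).val) hab
    rw [hB, colval', colval a (by omega)] at h1
    have : a/4 ≤ k - 1 := by omega
    split at h1 <;> omega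
  · have h1 := congrArg (fun p => (Prod.fst p).val) hab
    rw [colval a (by omega), colval b (by omega)] at h1
    have h2 := congrArg Prod.snd hab
    rw [row a (by omega), row b (by omega)] at h2
    by_cases ha2 : a % 4 < 2 <;> by_cases hb2 : b % 4 < 2
    · rw [if_pos ha2, if_pos hb2] at h1; omega
    · rw [if_pos ha2, if_neg hb2] at h2; exact absurd h2 (by decide)
    · rw [if_neg ha2, if_pos hb2] at h2; exact absurd h2 (by decide)
    · rw [if_neg ha2, if_neg hb2] at h1; omega

lemma mem_tdS0 (q : ℕ) (hq : q ≤ k) (hk : 1 ≤ k) :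
    (cv (6*k+1) (6*q) (n6_pos k), (0 : Fin 2)) ∈ tdS k := by
  rcases Nat.lt_or_ge q k with h | h
  · refine Finset.mem_image.mpr ⟨4*q+0, Finset.mem_range.mpr (by omega), ?_⟩
    rw [tdF_eval k q 0 h (by omega)]
    norm_num
  · have hqk : q = k := by omega
    refine Finset.mem_image.mpr ⟨4*k, Finset.mem_range.mpr (by omega), ?_⟩
    rw [tdF_last, hqk]

lemma mem_tdS1 (q : ℕ) (hq : q < k) :
    (cv (6*k+1) (6*q+1) (n6_pos k), (0 : Fin 2)) ∈ tdS k := by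
  refine Finset.mem_image.mpr ⟨4*q+1, Finset.mem_range.mpr (by omega), ?_⟩
  rw [tdF_eval k q 1 hq (by omega)]
  norm_num

lemma mem_tdS3 (q : ℕ) (hq : q < k) :
    (cv (6*k+1) (6*q+3) (n6_pos k), (1 : Fin 2)) ∈ tdS k := by
  refine Finset.mem_image.mpr ⟨4*q+2, Finset.mem_range.mpr (by omega), ?_⟩
  rw [tdF_eval k q 2 hq (by omega)]
  norm_num

lemma mem_tdS4 (q : ℕ) (hq : q < k) :
    (cv (6*k+1) (6*q+4) (n6_pos k), (1 : Fin 2)) ∈ tdS k := by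
  refine Finset.mem_image.mpr ⟨4*q+3, Finset.mem_range.mpr (by omega), ?_⟩
  rw [tdF_eval k q 3 hq (by omega)]
  norm_num

lemma mem_row0 (hk : 1 ≤ k) (x : ℕ) (hx : x % 6 = 0 ∨ x % 6 = 1) (hxle : x ≤ 6*k) :
    (cv (6*k+1) x (n6_pos k), (0 : Fin 2)) ∈ tdS k := by
  rcases hx with h | h
  · rw [show x = 6*(x/6) by omega]
    exact mem_tdS0 k (x/6) (by omega) hk
  · rw [show x = 6*(x/6)+1 by omega]
    exact mem_tdS1 k (x/6) (by omega)

lemma mem_row1 (hk : 1 ≤ k) (x : ℕ) (hx : x % 6 = 3 ∨ x % 6 = 4) (hxle : x ≤ 6*k) :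
    (cv (6*k+1) x (n6_pos k), (1 : Fin 2)) ∈ tdS k := by
  rcases hx with h | h
  · rw [show x = 6*(x/6)+3 by omega]
    exact mem_tdS3 k (x/6) (by omega)
  · rw [show x = 6*(x/6)+4 by omega]
    exact mem_tdS4 k (x/6) (by omega)

lemma tdS_total (hk : 1 ≤ k) : IsTotalDominatingSet (cycleGraph (6*k+1) □ K2) (tdS k) := by
  rintro ⟨v, r⟩
  have hn7 : 7 ≤ 6*k+1 := by omega
  set m := v.val with hm
  have hmlt : m < 6*k+1 := v.isLt
  have hveq : v = cv (6*k+1) m (n6_pos k) := (cv_self _ v).symm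
  have hadjup : (cycleGraph (6*k+1)).Adj (cv (6*k+1) m (n6_pos k)) (cv (6*k+1) (m+1) (n6_pos k)) :=
    cv_adj (n6_pos k) hn7 m
  have hadjdn : 1 ≤ m → (cycleGraph (6*k+1)).Adj (cv (6*k+1) m (n6_pos k))
      (cv (6*k+1) (m-1) (n6_pos k)) := by
    intro h1
    have h := cv_adj (n6_pos k) hn7 (m-1)
    rw [show m - 1 + 1 = m by omega] at h
    exact h.symm
  fin_cases r
  · -- row 0
    rcases show m % 6 = 0 ∨ m % 6 = 1 ∨ m % 6 = 2 ∨ m % 6 = 3 ∨ m % 6 = 4 ∨ m % 6 = 5 by omega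
      with h | h | h | h | h | h
    · -- use (m+1, 0)
      refine ⟨(cv (6*k+1) (m+1) (n6_pos k), 0), ?_, ?_⟩
      · rcases Nat.lt_or_ge m (6*k) with hlt | hge
        · exact mem_row0 k hk (m+1) (by omega) (by omega)
        · have hme : m = 6*k := by omega
          have : cv (6*k+1) (m+1) (n6_pos k) = cv (6*k+1) 0 (n6_pos k) :=
            cv_eq (n6_pos k) (by rw [hme]; simp)
          rw [this]
          exact mem_row0 k hk 0 (by omega) (by omega)
      · rw [hveq]
        exact SimpleGraph.boxProd_adj.mpr (Or.inl ⟨hadjup, rfl⟩)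
    · exact ⟨(cv (6*k+1) (m-1) (n6_pos k), 0), mem_row0 k hk (m-1) (by omega) (by omega),
        by rw [hveq]; exact SimpleGraph.boxProd_adj.mpr (Or.inl ⟨hadjdn (by omega), rfl⟩)⟩
    · exact ⟨(cv (6*k+1) (m-1) (n6_pos k), 0), mem_row0 k hk (m-1) (by omega) (by omega),
        by rw [hveq]; exact SimpleGraph.boxProd_adj.mpr (Or.inl ⟨hadjdn (by omega), rfl⟩)⟩
    · exact ⟨(cv (6*k+1) m (n6_pos k), 1), mem_row1 k hk m (by omega) (by omega),
        by rw [hveq]; exact vert_adj (by decide)⟩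
    · exact ⟨(cv (6*k+1) m (n6_pos k), 1), mem_row1 k hk m (by omega) (by omega),
        by rw [hveq]; exact vert_adj (by decide)⟩
    · refine ⟨(cv (6*k+1) (m+1) (n6_pos k), 0), ?_, ?_⟩
      · exact mem_row0 k hk (m+1) (by omega) (by omega)
      · rw [hveq]
        exact SimpleGraph.boxProd_adj.mpr (Or.inl ⟨hadjup, rfl⟩)
  · -- row 1
    rcases show m % 6 = 0 ∨ m % 6 = 1 ∨ m % 6 = 2 ∨ m % 6 = 3 ∨ m % 6 = 4 ∨ m % 6 = 5 by omega
      with h | h | h | h | h | h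
    · exact ⟨(cv (6*k+1) m (n6_pos k), 0), mem_row0 k hk m (by omega) (by omega),
        by rw [hveq]; exact vert_adj (by decide)⟩
    · exact ⟨(cv (6*k+1) m (n6_pos k), 0), mem_row0 k hk m (by omega) (by omega),
        by rw [hveq]; exact vert_adj (by decide)⟩
    · exact ⟨(cv (6*k+1) (m+1) (n6_pos k), 1), mem_row1 k hk (m+1) (by omega) (by omega),
        by rw [hveq]; exact SimpleGraph.boxProd_adj.mpr (Or.inl ⟨hadjup, rfl⟩)⟩
    · exact ⟨(cv (6*k+1) (m+1) (n6_pos k), 1), mem_row1 k hk (m+1) (by omega) (by omega),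
        by rw [hveq]; exact SimpleGraph.boxProd_adj.mpr (Or.inl ⟨hadjup, rfl⟩)⟩
    · exact ⟨(cv (6*k+1) (m-1) (n6_pos k), 1), mem_row1 k hk (m-1) (by omega) (by omega),
        by rw [hveq]; exact SimpleGraph.boxProd_adj.mpr (Or.inl ⟨hadjdn (by omega), rfl⟩)⟩
    · exact ⟨(cv (6*k+1) (m-1) (n6_pos k), 1), mem_row1 k hk (m-1) (by omega) (by omega),
        by rw [hveq]; exact SimpleGraph.boxProd_adj.mpr (Or.inl ⟨hadjdn (by omega), rfl⟩)⟩

end Sets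

/-- For every `k ≥ 1`, `γ_t(C_{6k+1} □ K₂) = 2 γ(C_{6k+1}) - 1 = 4k + 1`. -/
theorem totalDomination_prism_cycle (k : ℕ) (hk : 1 ≤ k) :
    totalDominationNumber (cycleGraph (6 * k + 1) □ K2) =
        2 * dominationNumber (cycleGraph (6 * k + 1)) - 1 ∧
      totalDominationNumber (cycleGraph (6 * k + 1) □ K2) = 4 * k + 1 := by
  have hdom : dominationNumber (cycleGraph (6 * k + 1)) = 2 * k + 1 := by
    apply le_antisymm
    · exact Nat.sInf_le ⟨domS k, domS_dom k hk, domS_card k⟩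
    · have hmem : (2*k+1) ∈ {n : ℕ | ∃ S : Finset (Fin (6*k+1)),
          IsDominatingSet (cycleGraph (6*k+1)) S ∧ S.card = n} :=
        ⟨domS k, domS_dom k hk, domS_card k⟩
      apply le_csInf ⟨2*k+1, hmem⟩
      rintro N ⟨S, hS, rfl⟩
      have h1 := (dom_lb hS).trans_eq
        (Finset.sum_congr rfl (fun u _ => by rw [cyc_deg (show 3 ≤ 6*k+1 by omega) u]))
      simp only [Finset.sum_const, smul_eq_mul, Fintype.card_fin] at h1
      omega
  have htot : totalDominationNumber (cycleGraph (6 * k + 1) □ K2) = 4 * k + 1 := by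
    apply le_antisymm
    · exact Nat.sInf_le ⟨tdS k, tdS_total k hk, tdS_card k hk⟩
    · have hmem : (4*k+1) ∈ {n : ℕ | ∃ S : Finset (Fin (6*k+1) × Fin 2),
          IsTotalDominatingSet (cycleGraph (6*k+1) □ K2) S ∧ S.card = n} :=
        ⟨tdS k, tdS_total k hk, tdS_card k hk⟩
      apply le_csInf ⟨4*k+1, hmem⟩
      rintro N ⟨S, hS, rfl⟩
      have h1 := (total_lb hS).trans_eq
        (Finset.sum_congr rfl (fun u _ =>
          @prism_deg (6*k+1) (show 3 ≤ 6*k+1 by omega) u (SimpleGraph.neighborSetFintype _ u)))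
      simp only [Finset.sum_const, smul_eq_mul, Fintype.card_prod, Fintype.card_fin] at h1
      omega
  refine ⟨?_, htot⟩
  rw [htot, hdom]
  omega
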